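/- (Fundamental identity for fractional derivatives with regular kernels.) Let T > 0 and let I ⊆ ℝ be an open set. Let k̃ : [0,T] → ℝ satisfy k̃(t) = k̃(0) + ∫₀ᵗ k̃'(s) ds for some k̃' ∈ L¹((0,T)) (i.e. k̃ ∈ W^{1,1}([0,T])), let h : I → ℝ be continuously differentiable, and let u ∈ L¹((0,T)) with u(t) ∈ I for a.e. t ∈ (0,T). Suppose that the functions h∘u, (h'∘u)·u and (h'∘u)·(k̃'*u) belong to L¹((0,T)). Then for a.e. t ∈ (0,T) there exist real numbers D₁, D₂ such that the function k̃*u is differentiable at t with derivative D₁, the function k̃*(h∘u) is differentiable at t with derivative D₂, and h'(u(t))·D₁ = D₂ + ( h'(u(t)) u(t) − h(u(t)) )·k̃(t) + ∫₀ᵗ ( h(u(t−τ)) − h(u(t)) − h'(u(t))·(u(t−τ) − u(t)) )·(−k̃'(τ)) dτ. -/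

import Mathlib

open MeasureTheory

open Set Filter Topology

lemma aux_ftc (g : ℝ → ℝ) (hg : Integrable g) :
    ∀ᵐ t : ℝ, HasDerivAt (fun s => ∫ r in (0:ℝ)..s, g r) (g t) t := by
  filter_upwards [(IsUnifLocDoublingMeasure.vitaliFamily (volume : Measure ℝ)
    1).ae_tendsto_average_norm_sub hg.locallyIntegrable] with t ht
  have hInt : ∀ a b : ℝ, IntervalIntegrable g volume a b := fun a b => hg.intervalIntegrable
  have key : ∀ a b : ℝ, a ≤ b →
      ‖(∫ r in (0:ℝ)..b, g r) - (∫ r in (0:ℝ)..a, g r) - (b - a) • g t‖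
        ≤ ∫ y in Set.Icc a b, ‖g y - g t‖ := by
    intro a b hab
    have h1 : (∫ r in (0:ℝ)..b, g r) - (∫ r in (0:ℝ)..a, g r) = ∫ r in a..b, g r :=
      intervalIntegral.integral_interval_sub_left (hInt 0 b) (hInt 0 a)
    have h2 : (b - a) • g t = ∫ _ in a..b, g t := by
      rw [intervalIntegral.integral_const]
    rw [h1, h2, ← intervalIntegral.integral_sub (hInt a b) intervalIntegrable_const]
    calc ‖∫ r in a..b, (g r - g t)‖ ≤ |∫ r in a..b, ‖g r - g t‖| :=
          intervalIntegral.norm_integral_le_abs_integral_norm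
      _ = ∫ r in a..b, ‖g r - g t‖ :=
          abs_of_nonneg (intervalIntegral.integral_nonneg hab (fun _ _ => norm_nonneg _))
      _ = ∫ r in Set.Ioc a b, ‖g r - g t‖ := intervalIntegral.integral_of_le hab
      _ = ∫ r in Set.Icc a b, ‖g r - g t‖ := integral_Icc_eq_integral_Ioc.symm
  rw [hasDerivAt_iff_tendsto, ← nhdsNE_sup_pure t]
  apply Filter.Tendsto.sup
  · rw [← nhdsLT_sup_nhdsGT t]
    apply Filter.Tendsto.sup
    · -- from the left
      refine squeeze_zero' (Eventually.of_forall fun s => by positivity) ?_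
        (ht.comp (Real.tendsto_Icc_vitaliFamily_left t))
      · filter_upwards [self_mem_nhdsWithin] with s (hs : s < t)
        have hm : (volume (Set.Icc s t)).toReal = t - s := by
          rw [Real.volume_Icc]; exact ENNReal.toReal_ofReal (by linarith)
        have hX : (∫ r in (0:ℝ)..s, g r) - (∫ r in (0:ℝ)..t, g r) - (s - t) • g t
            = -((∫ r in (0:ℝ)..t, g r) - (∫ r in (0:ℝ)..s, g r) - (t - s) • g t) := by
          simp only [smul_eq_mul]; ring
        have hb : ‖s - t‖⁻¹ = (t - s)⁻¹ := by
          rw [Real.norm_eq_abs, abs_sub_comm, abs_of_pos (by linarith)]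
        simp only [Function.comp_apply]
        rw [setAverage_eq, measureReal_def, hm, hX, norm_neg, hb, smul_eq_mul]
        exact mul_le_mul_of_nonneg_left (key s t hs.le) (inv_nonneg.2 (by linarith))
    · -- from the right
      refine squeeze_zero' (Eventually.of_forall fun s => by positivity) ?_
        (ht.comp (Real.tendsto_Icc_vitaliFamily_right t))
      · filter_upwards [self_mem_nhdsWithin] with s (hs : t < s)
        have hm : (volume (Set.Icc t s)).toReal = s - t := by
          rw [Real.volume_Icc]; exact ENNReal.toReal_ofReal (by linarith)
        have hb : ‖s - t‖⁻¹ = (s - t)⁻¹ := by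
          rw [Real.norm_eq_abs, abs_of_pos (by linarith)]
        simp only [Function.comp_apply]
        rw [setAverage_eq, measureReal_def, hm, hb, smul_eq_mul]
        exact mul_le_mul_of_nonneg_left (key t s hs.le) (inv_nonneg.2 (by linarith))
  · refine tendsto_pure_left.mpr fun s hs => ?_
    simpa using mem_of_mem_nhds hs

lemma aux_rep (T : ℝ) (k0 w0 : ℝ → ℝ) (hk : Integrable k0) (hw : Integrable w0)
    (hk0 : ∀ x, x ∉ Set.Ioo 0 T → k0 x = 0) (hw0 : ∀ x, x ∉ Set.Ioo 0 T → w0 x = 0)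
    {s : ℝ} (hs : s ∈ Set.Ioo 0 T) :
    ∫ τ in Set.Ioo 0 s, (∫ r in (0:ℝ)..(s - τ), k0 r) * w0 τ
      = ∫ σ in Set.Ioc 0 s, ∫ τ, w0 τ * k0 (σ - τ) := by
  classical
  have kfact : ∀ x, k0 x ≠ 0 → x ∈ Set.Ioo 0 T := fun x hx => by
    by_contra hc; exact hx (hk0 x hc)
  have wfact : ∀ x, w0 x ≠ 0 → x ∈ Set.Ioo 0 T := fun x hx => by
    by_contra hc; exact hx (hw0 x hc)
  set H : ℝ → ℝ → ℝ :=
    fun τ σ => Set.indicator (Set.Ioc 0 s) (fun _ => (1:ℝ)) σ * (w0 τ * k0 (σ - τ)) with hHdef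
  have step1 : ∀ τ ∈ Set.Ioo 0 s,
      (∫ r in (0:ℝ)..(s - τ), k0 r) * w0 τ = ∫ σ, H τ σ := by
    intro τ hτ
    have h1 : ∫ r in (0:ℝ)..(s - τ), k0 r
        = ∫ r, (Set.Ioc 0 (s - τ)).indicator k0 r := by
      rw [intervalIntegral.integral_of_le (by linarith [hτ.2]),
        integral_indicator measurableSet_Ioc]
    have h2 : ∫ r, (Set.Ioc 0 (s - τ)).indicator k0 r
        = ∫ σ, (Set.Ioc 0 (s - τ)).indicator k0 (σ - τ) :=
      (integral_sub_right_eq_self _ τ).symm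
    rw [h1, h2, ← integral_mul_const]
    refine integral_congr_ae (Eventually.of_forall fun σ => ?_)
    rcases eq_or_ne (w0 τ) 0 with h0 | h0
    · simp [hHdef, h0]
    rcases eq_or_ne (k0 (σ - τ)) 0 with h1' | h1'
    · simp [hHdef, Set.indicator_apply, h1']
    have hστ := kfact _ h1'
    have hmem : σ - τ ∈ Set.Ioc 0 (s - τ) ↔ σ ∈ Set.Ioc 0 s := by
      constructor
      · exact fun hm => ⟨by linarith [hστ.1, hτ.1], by linarith [hm.2]⟩
      · exact fun hm => ⟨hστ.1, by linarith [hm.2]⟩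
    simp only [hHdef, Set.indicator_apply]
    split_ifs with ha hb hb
    · ring
    · exact absurd (hmem.1 ha) hb
    · exact absurd (hmem.2 hb) ha
    · ring
  have Hzero : ∀ τ, τ ∉ Set.Ioo 0 s → ∀ σ, H τ σ = 0 := by
    intro τ hτ σ
    rcases eq_or_ne (w0 τ) 0 with h0 | h0
    · simp [hHdef, h0]
    rcases eq_or_ne (k0 (σ - τ)) 0 with h1' | h1'
    · simp [hHdef, h1']
    have hτT := wfact _ h0
    have hστ := kfact _ h1'
    have hsτ : s ≤ τ := by
      by_contra hc
      exact hτ ⟨hτT.1, lt_of_not_ge hc⟩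
    have hσ : σ ∉ Set.Ioc 0 s := by
      intro hσ
      have : σ ≤ s := hσ.2
      linarith [hστ.1]
    simp [hHdef, Set.indicator_of_notMem hσ]
  have hbase : Integrable (fun p : ℝ × ℝ => w0 p.2 * k0 (p.1 - p.2))
      (volume.prod volume) := by
    simpa using hw.convolution_integrand (ContinuousLinearMap.mul ℝ ℝ) hk
  have hswap : Integrable (fun p : ℝ × ℝ => w0 p.1 * k0 (p.2 - p.1))
      (volume.prod volume) := by
    have := hbase.swap
    simpa [Function.comp_def] using this
  have hH : Integrable (fun p : ℝ × ℝ => H p.1 p.2) (volume.prod volume) := by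
    refine Integrable.mono' hswap.norm ?_ (Eventually.of_forall fun p => ?_)
    · exact (((measurable_const.indicator measurableSet_Ioc).comp
        measurable_snd).aestronglyMeasurable.mul hswap.aestronglyMeasurable)
    · simp only [hHdef, Set.indicator_apply]
      split_ifs <;> simp [abs_mul] <;> positivity
  calc ∫ τ in Set.Ioo 0 s, (∫ r in (0:ℝ)..(s - τ), k0 r) * w0 τ
      = ∫ τ in Set.Ioo 0 s, ∫ σ, H τ σ :=
        setIntegral_congr_fun measurableSet_Ioo fun τ hτ => step1 τ hτ
    _ = ∫ τ, ∫ σ, H τ σ := by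
        refine setIntegral_eq_integral_of_forall_compl_eq_zero fun τ hτ => ?_
        simp [Hzero τ hτ]
    _ = ∫ σ, ∫ τ, H τ σ := integral_integral_swap hH
    _ = ∫ σ, Set.indicator (Set.Ioc 0 s) (fun σ' => ∫ τ, w0 τ * k0 (σ' - τ)) σ := by
        refine integral_congr_ae (Eventually.of_forall fun σ => ?_)
        by_cases hσ : σ ∈ Set.Ioc 0 s
        · simp only [hHdef, Set.indicator_of_mem hσ, one_mul]
        · simp only [hHdef, Set.indicator_of_notMem hσ, zero_mul, integral_zero]
    _ = ∫ σ in Set.Ioc 0 s, ∫ τ, w0 τ * k0 (σ - τ) :=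
        integral_indicator measurableSet_Ioc

lemma aux_eq (T : ℝ) (ktil k' : ℝ → ℝ)
    (hk'int : IntegrableOn k' (Set.Ioo 0 T))
    (hkAC : ∀ t ∈ Set.Icc (0:ℝ) T, ktil t = ktil 0 + ∫ r in (0:ℝ)..t, k' r)
    (v : ℝ → ℝ) (hv : IntegrableOn v (Set.Ioo 0 T))
    {s : ℝ} (hs : s ∈ Set.Ioo 0 T) :
    ∫ τ in (0:ℝ)..s, ktil (s - τ) * v τ
      = ∫ σ in (0:ℝ)..s, (ktil 0 * Set.indicator (Set.Ioo 0 T) v σ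
          + ∫ τ, Set.indicator (Set.Ioo 0 T) v τ
              * Set.indicator (Set.Ioo 0 T) k' (σ - τ)) := by
  classical
  set k0 := Set.indicator (Set.Ioo 0 T) k' with hk0d
  set w0 := Set.indicator (Set.Ioo 0 T) v with hw0d
  have hk0i : Integrable k0 := (integrable_indicator_iff measurableSet_Ioo).2 hk'int
  have hw0i : Integrable w0 := (integrable_indicator_iff measurableSet_Ioo).2 hv
  have hk0z : ∀ x, x ∉ Set.Ioo 0 T → k0 x = 0 := fun x hx => Set.indicator_of_notMem hx _
  have hw0z : ∀ x, x ∉ Set.Ioo 0 T → w0 x = 0 := fun x hx => Set.indicator_of_notMem hx _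
  have hbdd : ∀ x : ℝ, ‖∫ r in (0:ℝ)..x, k0 r‖ ≤ ∫ r, ‖k0 r‖ := by
    intro x
    rw [intervalIntegral.intervalIntegral_eq_integral_uIoc]
    calc ‖(if (0:ℝ) ≤ x then (1:ℝ) else -1) • ∫ r in Set.uIoc 0 x, k0 r‖
        = ‖∫ r in Set.uIoc 0 x, k0 r‖ := by rw [norm_smul]; split_ifs <;> simp
      _ ≤ ∫ r in Set.uIoc 0 x, ‖k0 r‖ := norm_integral_le_integral_norm _
      _ ≤ ∫ r, ‖k0 r‖ :=
          setIntegral_le_integral hk0i.norm (Eventually.of_forall fun r => norm_nonneg _)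
  have hF : Continuous fun τ : ℝ => ∫ r in (0:ℝ)..(s - τ), k0 r :=
    (hk0i.continuous_primitive 0).comp (continuous_const.sub continuous_id)
  have hcw : Integrable (fun σ => ∫ τ, w0 τ * k0 (σ - τ)) (volume) := by
    have hb : Integrable (fun p : ℝ × ℝ => w0 p.2 * k0 (p.1 - p.2)) (volume.prod volume) := by
      simpa using hw0i.convolution_integrand (ContinuousLinearMap.mul ℝ ℝ) hk0i
    exact hb.integral_prod_left
  have hs0 : (0:ℝ) ≤ s := hs.1.le
  rw [intervalIntegral.integral_of_le hs0, integral_Ioc_eq_integral_Ioo]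
  have e1 : Set.EqOn (fun τ => ktil (s - τ) * v τ)
      (fun τ => ktil 0 * w0 τ + (∫ r in (0:ℝ)..(s - τ), k0 r) * w0 τ) (Set.Ioo 0 s) := by
    intro τ hτ
    have hτT : τ ∈ Set.Ioo 0 T := ⟨hτ.1, hτ.2.trans hs.2⟩
    have hsub : s - τ ∈ Set.Icc (0:ℝ) T := ⟨by linarith [hτ.2], by linarith [hs.2, hτ.1]⟩
    have hkk : ∫ r in (0:ℝ)..(s - τ), k' r = ∫ r in (0:ℝ)..(s - τ), k0 r := by
      rw [intervalIntegral.integral_of_le hsub.1, intervalIntegral.integral_of_le hsub.1]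
      refine setIntegral_congr_fun measurableSet_Ioc fun r hr => ?_
      have : r ∈ Set.Ioo 0 T :=
        ⟨hr.1, lt_of_le_of_lt hr.2 (by simp only [Set.mem_Ioo] at hτ hs; linarith [hτ.1, hs.2])⟩
      exact (Set.indicator_of_mem this k').symm
    simp only
    rw [hkAC (s - τ) hsub, hkk, hw0d, Set.indicator_of_mem hτT]
    ring
  rw [setIntegral_congr_fun measurableSet_Ioo e1]
  have i1 : IntegrableOn (fun τ => ktil 0 * w0 τ) (Set.Ioo 0 s) :=
    (hw0i.const_mul _).integrableOn
  have i2 : IntegrableOn (fun τ => (∫ r in (0:ℝ)..(s - τ), k0 r) * w0 τ) (Set.Ioo 0 s) :=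
    (Integrable.bdd_mul hw0i hF.aestronglyMeasurable (Eventually.of_forall fun x => hbdd (s - x))).integrableOn
  rw [integral_add i1 i2, integral_const_mul,
    aux_rep T k0 w0 hk0i hw0i hk0z hw0z hs]
  rw [intervalIntegral.integral_of_le hs0]
  have : ∫ σ in Set.Ioc 0 s, (ktil 0 * w0 σ + ∫ τ, w0 τ * k0 (σ - τ))
      = ktil 0 * (∫ σ in Set.Ioo 0 s, w0 σ) + ∫ σ in Set.Ioc 0 s, ∫ τ, w0 τ * k0 (σ - τ) := by
    rw [integral_add ((hw0i.const_mul _).integrableOn) hcw.integrableOn, integral_const_mul,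
      integral_Ioc_eq_integral_Ioo]
  rw [this]

/-- Fundamental identity for fractional derivatives with regular kernels
(Vergara--Zacher, Lemma 2.2): for `k̃ ∈ W^{1,1}([0,T])`, `h ∈ C¹(I)` and `u ∈ L¹((0,T))`
with values in `I`, assuming the integrability of `h(u)`, `h'(u)u` and `h'(u)(k̃'*u)`,
for a.e. `t ∈ (0,T)` both `k̃*u` and `k̃*h(u)` are differentiable at `t` and
`h'(u(t)) d/dt(k̃*u)(t) = d/dt(k̃*h(u))(t) + (h'(u(t))u(t) - h(u(t))) k̃(t)
+ ∫₀ᵗ (h(u(t-τ)) - h(u(t)) - h'(u(t))(u(t-τ)-u(t))) (-k̃'(τ)) dτ`. -/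
theorem fundamental_identity_regular_kernel
    (T : ℝ) (hT : 0 < T) (I : Set ℝ) (hI : IsOpen I)
    (ktil k' : ℝ → ℝ)
    (hk'int : IntegrableOn k' (Set.Ioo 0 T))
    (hkAC : ∀ t ∈ Set.Icc (0:ℝ) T, ktil t = ktil 0 + ∫ s in (0:ℝ)..t, k' s)
    (h h' : ℝ → ℝ)
    (hderiv : ∀ x ∈ I, HasDerivAt h (h' x) x) (hcont : ContinuousOn h' I)
    (u : ℝ → ℝ) (hu : IntegrableOn u (Set.Ioo 0 T))
    (huI : ∀ᵐ t ∂(volume.restrict (Set.Ioo 0 T)), u t ∈ I)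
    (hint1 : IntegrableOn (fun t => h (u t)) (Set.Ioo 0 T))
    (hint2 : IntegrableOn (fun t => h' (u t) * u t) (Set.Ioo 0 T))
    (hint3 : IntegrableOn
      (fun t => h' (u t) * ∫ τ in (0:ℝ)..t, k' (t - τ) * u τ) (Set.Ioo 0 T)) :
    ∀ᵐ t ∂(volume.restrict (Set.Ioo 0 T)), ∃ D₁ D₂ : ℝ,
      HasDerivAt (fun s => ∫ τ in (0:ℝ)..s, ktil (s - τ) * u τ) D₁ t ∧
      HasDerivAt (fun s => ∫ τ in (0:ℝ)..s, ktil (s - τ) * h (u τ)) D₂ t ∧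
      h' (u t) * D₁ = D₂ + (h' (u t) * u t - h (u t)) * ktil t
        + ∫ τ in (0:ℝ)..t,
            (h (u (t - τ)) - h (u t) - h' (u t) * (u (t - τ) - u t)) * (-k' τ) := by
  classical
  set k0 := Set.indicator (Set.Ioo 0 T) k' with hk0d
  set u0 := Set.indicator (Set.Ioo 0 T) u with hu0d
  set w0 := Set.indicator (Set.Ioo 0 T) (fun t => h (u t)) with hw0d
  have hk0i : Integrable k0 := (integrable_indicator_iff measurableSet_Ioo).2 hk'int
  have hu0i : Integrable u0 := (integrable_indicator_iff measurableSet_Ioo).2 hu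
  have hw0i : Integrable w0 := (integrable_indicator_iff measurableSet_Ioo).2 hint1
  have hbu : Integrable (fun p : ℝ × ℝ => u0 p.2 * k0 (p.1 - p.2)) (volume.prod volume) := by
    simpa using hu0i.convolution_integrand (ContinuousLinearMap.mul ℝ ℝ) hk0i
  have hbw : Integrable (fun p : ℝ × ℝ => w0 p.2 * k0 (p.1 - p.2)) (volume.prod volume) := by
    simpa using hw0i.convolution_integrand (ContinuousLinearMap.mul ℝ ℝ) hk0i
  set cu : ℝ → ℝ := fun σ => ∫ τ, u0 τ * k0 (σ - τ) with hcud
  set cw : ℝ → ℝ := fun σ => ∫ τ, w0 τ * k0 (σ - τ) with hcwd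
  have hcui : Integrable cu := hbu.integral_prod_left
  have hcwi : Integrable cw := hbw.integral_prod_left
  have hg1 : Integrable (fun σ => ktil 0 * u0 σ + cu σ) := (hu0i.const_mul _).add hcui
  have hg2 : Integrable (fun σ => ktil 0 * w0 σ + cw σ) := (hw0i.const_mul _).add hcwi
  filter_upwards [ae_restrict_mem measurableSet_Ioo,
    ae_restrict_of_ae (aux_ftc _ hg1), ae_restrict_of_ae (aux_ftc _ hg2),
    ae_restrict_of_ae hbu.prod_right_ae, ae_restrict_of_ae hbw.prod_right_ae]
    with t htm hd1 hd2 hcu1 hcw1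
  have hu0t : u0 t = u t := Set.indicator_of_mem htm u
  have hw0t : w0 t = h (u t) := Set.indicator_of_mem htm _
  refine ⟨ktil 0 * u0 t + cu t, ktil 0 * w0 t + cw t, ?_, ?_, ?_⟩
  · refine hd1.congr_of_eventuallyEq ?_
    filter_upwards [Ioo_mem_nhds htm.1 htm.2] with s hsm
    exact aux_eq T ktil k' hk'int hkAC u hu hsm
  · refine hd2.congr_of_eventuallyEq ?_
    filter_upwards [Ioo_mem_nhds htm.1 htm.2] with s hsm
    exact aux_eq T ktil k' hk'int hkAC (fun t => h (u t)) hint1 hsm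
  · -- the identity
    set c1 := h (u t) with hc1
    set c2 := h' (u t) with hc2
    set A := ∫ τ in Set.Ioo 0 t, k0 τ with hA
    have hktilt : ktil t = ktil 0 + A := by
      rw [hkAC t (Set.mem_Icc.mpr ⟨htm.1.le, htm.2.le⟩)]
      congr 1
      rw [intervalIntegral.integral_of_le htm.1.le, integral_Ioc_eq_integral_Ioo]
      exact setIntegral_congr_fun measurableSet_Ioo fun r hr =>
        (Set.indicator_of_mem (show r ∈ Set.Ioo 0 T from ⟨hr.1, hr.2.trans htm.2⟩) k').symm
    -- integrability of the reflected convolution integrands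
    have hIw : Integrable (fun τ => w0 (t - τ) * k0 τ) := by
      have h1 := hcw1.comp_sub_left t
      refine h1.congr (Eventually.of_forall fun τ => ?_)
      simp [sub_sub_cancel]
    have hIu : Integrable (fun τ => u0 (t - τ) * k0 τ) := by
      have h1 := hcu1.comp_sub_left t
      refine h1.congr (Eventually.of_forall fun τ => ?_)
      simp [sub_sub_cancel]
    have hvanw : ∀ τ, τ ∉ Set.Ioo 0 t → w0 (t - τ) * k0 τ = 0 := by
      intro τ hτ
      by_cases hk : τ ∈ Set.Ioo 0 T
      · have : t - τ ∉ Set.Ioo 0 T := by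
          intro hc
          exact hτ ⟨by linarith [hc.2, htm.2, hk.1], by linarith [hc.1]⟩
        rw [hw0d, Set.indicator_of_notMem this, zero_mul]
      · rw [hk0d, Set.indicator_of_notMem hk, mul_zero]
    have hvanu : ∀ τ, τ ∉ Set.Ioo 0 t → u0 (t - τ) * k0 τ = 0 := by
      intro τ hτ
      by_cases hk : τ ∈ Set.Ioo 0 T
      · have : t - τ ∉ Set.Ioo 0 T := by
          intro hc
          exact hτ ⟨by linarith [hc.2, htm.2, hk.1], by linarith [hc.1]⟩
        rw [hu0d, Set.indicator_of_notMem this, zero_mul]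
      · rw [hk0d, Set.indicator_of_notMem hk, mul_zero]
    have hP1 : ∫ τ in Set.Ioo 0 t, w0 (t - τ) * k0 τ = cw t := by
      rw [setIntegral_eq_integral_of_forall_compl_eq_zero hvanw]
      have h2 := integral_sub_left_eq_self (fun x => w0 x * k0 (t - x)) volume t
      simpa [sub_sub_cancel] using h2
    have hP2 : ∫ τ in Set.Ioo 0 t, u0 (t - τ) * k0 τ = cu t := by
      rw [setIntegral_eq_integral_of_forall_compl_eq_zero hvanu]
      have h2 := integral_sub_left_eq_self (fun x => u0 x * k0 (t - x)) volume t
      simpa [sub_sub_cancel] using h2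
    have hJ : (∫ τ in (0:ℝ)..t, (h (u (t - τ)) - c1 - c2 * (u (t - τ) - u t)) * (-k' τ))
        = -cw t + (c2 * cu t + (c1 - c2 * u t) * A) := by
      rw [intervalIntegral.integral_of_le htm.1.le, integral_Ioc_eq_integral_Ioo]
      have e : Set.EqOn (fun τ => (h (u (t - τ)) - c1 - c2 * (u (t - τ) - u t)) * (-k' τ))
          (fun τ => (-1) * (w0 (t - τ) * k0 τ)
            + (c2 * (u0 (t - τ) * k0 τ) + (c1 - c2 * u t) * k0 τ)) (Set.Ioo 0 t) := by
        intro τ hτ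
        have hτT : τ ∈ Set.Ioo 0 T := ⟨hτ.1, hτ.2.trans htm.2⟩
        have htτ : t - τ ∈ Set.Ioo 0 T := ⟨by linarith [hτ.2], by linarith [hτ.1, htm.2]⟩
        simp only
        rw [hw0d, hu0d, hk0d, Set.indicator_of_mem htτ, Set.indicator_of_mem htτ,
          Set.indicator_of_mem hτT]
        ring
      rw [setIntegral_congr_fun measurableSet_Ioo e]
      have i1 : Integrable (fun τ => (-1 : ℝ) * (w0 (t - τ) * k0 τ)) := hIw.const_mul _
      have i2 : Integrable (fun τ => c2 * (u0 (t - τ) * k0 τ)) := hIu.const_mul _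
      have i3 : Integrable (fun τ => (c1 - c2 * u t) * k0 τ) := hk0i.const_mul _
      have i23 : Integrable (fun τ => c2 * (u0 (t - τ) * k0 τ) + (c1 - c2 * u t) * k0 τ) :=
        i2.add i3
      rw [integral_add i1.integrableOn i23.integrableOn,
        integral_add i2.integrableOn i3.integrableOn,
        integral_const_mul, integral_const_mul, integral_const_mul, hP1, hP2, ← hA]
      ring
    rw [hJ, hktilt, hu0t, hw0t]
    ring
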